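/- Let n, k, l be natural numbers with k + l ≥ 1, and let κ, μ : Fin n → ℝ be two families of real numbers such that κ_α · κ_β = μ_α · μ_β for all indices α ≠ β. Then σ_{2k+1}(κ) · σ_{2l+1}(κ) = σ_{2k+1}(μ) · σ_{2l+1}(μ), i.e. the product of any two odd elementary symmetric functions (not both equal to σ_1) is determined by the pairwise products of distinct entries. -/

import Mathlib

/-- The `m`-th elementary symmetric function of the family `κ : Fin n → ℝ`:
the sum over all `m`-element subsets `S` of `Fin n` of `∏ i ∈ S, κ i`. -/
noncomputable def esymmFun (n m : ℕ) (κ : Fin n → ℝ) : ℝ :=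
  ∑ S ∈ Finset.powersetCard m (Finset.univ : Finset (Fin n)), ∏ i ∈ S, κ i

lemma esymmFun_eq_zero (n m : ℕ) (κ : Fin n → ℝ)
    (h : (Finset.univ.filter (fun i => κ i ≠ 0)).card < m) : esymmFun n m κ = 0 := by
  unfold esymmFun
  apply Finset.sum_eq_zero
  intro S hS
  rw [Finset.mem_powersetCard] at hS
  have hns : ¬ S ⊆ Finset.univ.filter (fun i => κ i ≠ 0) := by
    intro hsub
    have := Finset.card_le_card hsub
    omega
  obtain ⟨i, hiS, hi⟩ := Finset.not_subset.mp hns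
  have hzero : κ i = 0 := by
    simpa using hi
  exact Finset.prod_eq_zero hiS hzero

lemma esymmFun_smul (n m : ℕ) (c : ℝ) (κ : Fin n → ℝ) :
    esymmFun n m (fun i => c * κ i) = c ^ m * esymmFun n m κ := by
  unfold esymmFun
  rw [Finset.mul_sum]
  apply Finset.sum_congr rfl
  intro S hS
  rw [Finset.mem_powersetCard] at hS
  rw [Finset.prod_mul_distrib, Finset.prod_const, hS.2]

theorem stmt_1 (n k l : ℕ) (hkl : 1 ≤ k + l) (κ μ : Fin n → ℝ)
    (h : ∀ α β : Fin n, α ≠ β → κ α * κ β = μ α * μ β) :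
    esymmFun n (2 * k + 1) κ * esymmFun n (2 * l + 1) κ =
      esymmFun n (2 * k + 1) μ * esymmFun n (2 * l + 1) μ := by
  by_cases H : ∃ α β γ : Fin n, α ≠ β ∧ α ≠ γ ∧ β ≠ γ ∧ κ α ≠ 0 ∧ κ β ≠ 0 ∧ κ γ ≠ 0
  · obtain ⟨α, β, γ, hab, hag, hbg, ha, hb, hg⟩ := H
    have hμab : κ α * κ β = μ α * μ β := h α β hab
    have hμag : κ α * κ γ = μ α * μ γ := h α γ hag
    have hμbg : κ β * κ γ = μ β * μ γ := h β γ hbg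
    have hμa : μ α ≠ 0 := by
      intro h0
      rw [h0, zero_mul] at hμab
      exact mul_ne_zero ha hb hμab
    have hsq : μ α * μ α = κ α * κ α := by
      have h1 : (μ α * μ α) * (κ β * κ γ) = (κ α * κ α) * (κ β * κ γ) := by
        linear_combination (-(μ α * μ γ)) * hμab + (-(κ α * κ β)) * hμag + (μ α * μ α) * hμbg
      exact mul_right_cancel₀ (mul_ne_zero hb hg) h1
    set c : ℝ := μ α / κ α with hc
    have hc2 : c * c = 1 := by
      rw [hc, div_mul_div_comm, hsq, div_self (mul_ne_zero ha ha)]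
    have hμ : ∀ i, μ i = c * κ i := by
      intro i
      by_cases hi : i = α
      · subst hi
        rw [hc, div_mul_cancel₀ _ ha]
      · have hiα := h i α hi
        have key : μ i * μ α = (c * κ i) * μ α := by
          rw [hc]
          rw [div_mul_eq_mul_div, div_mul_eq_mul_div, eq_div_iff ha]
          linear_combination (-(κ α)) * hiα + (-(κ i)) * hsq
        exact mul_right_cancel₀ hμa key
    have hμeq : μ = fun i => c * κ i := funext hμ
    rw [hμeq, esymmFun_smul, esymmFun_smul]
    have hpow : c ^ (2 * k + 1) * c ^ (2 * l + 1) = 1 := by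
      rw [← pow_add, show 2 * k + 1 + (2 * l + 1) = 2 * (k + l + 1) by ring, pow_mul, sq, hc2,
        one_pow]
    rw [mul_mul_mul_comm, hpow, one_mul]
  · have hκcard : (Finset.univ.filter (fun i => κ i ≠ 0)).card ≤ 2 := by
      by_contra hgt
      push_neg at hgt
      obtain ⟨a, haS, b, hbS, c, hcS, hab, hac, hbc⟩ := Finset.two_lt_card.mp hgt
      simp only [Finset.mem_filter, Finset.mem_univ, true_and] at haS hbS hcS
      exact H ⟨a, b, c, hab, hac, hbc, haS, hbS, hcS⟩
    have hμcard : (Finset.univ.filter (fun i => μ i ≠ 0)).card ≤ 2 := by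
      by_contra hgt
      push_neg at hgt
      obtain ⟨a, haS, b, hbS, c, hcS, hab, hac, hbc⟩ := Finset.two_lt_card.mp hgt
      simp only [Finset.mem_filter, Finset.mem_univ, true_and] at haS hbS hcS
      have h1 : κ a * κ b ≠ 0 := by rw [h a b hab]; exact mul_ne_zero haS hbS
      have h2 : κ a * κ c ≠ 0 := by rw [h a c hac]; exact mul_ne_zero haS hcS
      have h3 : κ b * κ c ≠ 0 := by rw [h b c hbc]; exact mul_ne_zero hbS hcS
      exact H ⟨a, b, c, hab, hac, hbc, (mul_ne_zero_iff.mp h1).1, (mul_ne_zero_iff.mp h1).2,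
        (mul_ne_zero_iff.mp h3).2⟩
    obtain hk | hl : 1 ≤ k ∨ 1 ≤ l := by omega
    · rw [esymmFun_eq_zero n (2 * k + 1) κ (by omega), esymmFun_eq_zero n (2 * k + 1) μ (by omega),
        zero_mul, zero_mul]
    · rw [esymmFun_eq_zero n (2 * l + 1) κ (by omega), esymmFun_eq_zero n (2 * l + 1) μ (by omega),
        mul_zero, mul_zero]
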